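/- The variance of the value function satisfies a Bellman equation: 𝒱_{j:j}(s) = 0 for all s ∈ S, and for all 1 ≤ i < j ≤ H and all s ∈ S, 𝒱_{i:j}(s) = (P_i 𝒱_{i+1:j})(s) + σ²_{i:j}(s). -/
import Mathlib


open Finset

/-- The operator `(P_t f)(s) = ∑_{s'} p_t(s,s') f(s')` induced by transition matrices `p`. -/
noncomputable def Pop {S : Type*} [Fintype S] (p : ℕ → S → S → ℝ) (t : ℕ) (f : S → ℝ) (s : S) : ℝ :=
  ∑ s', p t s s' * f s'

/-- The multi-step operator `P_{i:j} = P_i P_{i+1} ⋯ P_j` (identity when `j < i`). -/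
noncomputable def PC {S : Type*} [Fintype S] (p : ℕ → S → S → ℝ) (i j : ℕ) (f : S → ℝ) : S → ℝ :=
  (List.range' i (j + 1 - i)).foldr (fun t g => Pop p t g) f

/-- The value function: `V_{j:j} = r_j`, `V_{i:j} = r_i + P_i V_{i+1:j}` for `i < j`. -/
noncomputable def Vf {S : Type*} [Fintype S] (p : ℕ → S → S → ℝ) (r : ℕ → S → ℝ)
    (i j : ℕ) : S → ℝ :=
  if _h : i < j then fun s => r i s + Pop p i (Vf p r (i + 1) j) s
  else r j
termination_by j - i
decreasing_by omega

/-- The trajectory `s_i = s, s_{i+1} = σ 0, …, s_{i+k} = σ (k-1)` as a function of time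
(states outside `{i, …, i+k}` are irrelevant and set to `s`, resp. `σ`'s last values). -/
def pathFn {S : Type*} (s : S) (i : ℕ) {k : ℕ} (σ : Fin k → S) (t : ℕ) : S :=
  if h : i < t ∧ t - i - 1 < k then σ ⟨t - i - 1, h.2⟩ else s

/-- Expectation over trajectories of the Markov chain started in state `s` at time `i`,
running until time `j`: `E_{s,i:j}[g] = ∑_{s_{i+1},…,s_j} (∏_{t=i}^{j-1} p_t(s_t,s_{t+1})) g(s_i,…,s_j)`. -/
noncomputable def Ex {S : Type*} [Fintype S] (p : ℕ → S → S → ℝ) (i j : ℕ) (s : S)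
    (g : (ℕ → S) → ℝ) : ℝ :=
  ∑ σ : Fin (j - i) → S,
    (∏ t ∈ Finset.Ico i j, p t (pathFn s i σ t) (pathFn s i σ (t + 1))) * g (pathFn s i σ)

/-- The local variance of the value function:
`σ²_{i:j}(s) = ∑_{s'} p_i(s,s') (V_{i+1:j}(s') − (P_i V_{i+1:j})(s))²` for `i < j`, and `0` else. -/
noncomputable def sigmaSq {S : Type*} [Fintype S] (p : ℕ → S → S → ℝ) (r : ℕ → S → ℝ)
    (i j : ℕ) (s : S) : ℝ :=
  if i < j then
    ∑ s', p i s s' * (Vf p r (i + 1) j s' - Pop p i (Vf p r (i + 1) j) s) ^ 2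
  else 0

/-- The variance of the value function:
`𝒱_{i:j}(s) = E_{s,i:j}[(∑_{t=i}^j r_t(s_t) − V_{i:j}(s))²]`. -/
noncomputable def VarV {S : Type*} [Fintype S] (p : ℕ → S → S → ℝ) (r : ℕ → S → ℝ)
    (i j : ℕ) (s : S) : ℝ :=
  Ex p i j s (fun τ => ((∑ t ∈ Finset.Icc i j, r t (τ t)) - Vf p r i j s) ^ 2)

/- Auxiliary lemmas -/

lemma Ex_self {S : Type*} [Fintype S] (p : ℕ → S → S → ℝ) (i : ℕ) (s : S) (g : (ℕ → S) → ℝ) :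
    Ex p i i s g = g (fun _ => s) := by
  unfold Ex
  rw [Nat.sub_self]
  have : Subsingleton (Fin 0 → S) := ⟨fun a b => funext fun x => x.elim0⟩
  rw [Fintype.sum_subsingleton _ (fun _ : Fin 0 => s)]
  simp only [Finset.Ico_self, Finset.prod_empty, one_mul]
  congr 1
  funext t
  unfold pathFn
  rw [dif_neg (by omega)]

lemma Ex_add {S : Type*} [Fintype S] (p : ℕ → S → S → ℝ) (i j : ℕ) (s : S)
    (g h : (ℕ → S) → ℝ) :
    Ex p i j s (fun τ => g τ + h τ) = Ex p i j s g + Ex p i j s h := by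
  unfold Ex; rw [← Finset.sum_add_distrib]; exact Finset.sum_congr rfl fun σ _ => by ring

lemma Ex_const_mul {S : Type*} [Fintype S] (p : ℕ → S → S → ℝ) (i j : ℕ) (s : S)
    (c : ℝ) (g : (ℕ → S) → ℝ) :
    Ex p i j s (fun τ => c * g τ) = c * Ex p i j s g := by
  unfold Ex; rw [Finset.mul_sum]; exact Finset.sum_congr rfl fun σ _ => by ring

def consSplit {S : Type*} (n m : ℕ) (h : m = n + 1) : (S × (Fin n → S)) ≃ (Fin m → S) where
  toFun x := fun k => if hk : (k : ℕ) = 0 then x.1 else x.2 ⟨(k : ℕ) - 1, by omega⟩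
  invFun σ := (σ ⟨0, by omega⟩, fun k => σ ⟨(k : ℕ) + 1, by omega⟩)
  left_inv x := by
    ext k
    · simp
    · simp
  right_inv σ := by
    funext k
    by_cases hk : (k : ℕ) = 0
    · simp [hk]; congr 1; exact (Fin.ext hk.symm)
    · simp [hk]; congr 1; exact Fin.ext (by simp; omega)

lemma pathFn_split {S : Type*} (s s' : S) (i j : ℕ) (hij : i < j)
    (σ' : Fin (j - (i + 1)) → S) (t : ℕ) (ht : t ≤ j) :
    pathFn s i ((consSplit (j - (i + 1)) (j - i) (by omega)) (s', σ')) t =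
      if t ≤ i then s else pathFn s' (i + 1) σ' t := by
  unfold pathFn consSplit
  dsimp
  split_ifs with h1 h2 h3 h4 h5 <;>
    first | rfl | omega | (congr 1; exact Fin.ext (by simp; omega))

lemma Ex_step {S : Type*} [Fintype S] (p : ℕ → S → S → ℝ) (i j : ℕ) (hij : i < j) (s : S)
    (g : (ℕ → S) → ℝ)
    (hg : ∀ τ τ' : ℕ → S, (∀ t, i ≤ t → t ≤ j → τ t = τ' t) → g τ = g τ') :
    Ex p i j s g = ∑ s', p i s s' *
      Ex p (i + 1) j s' (fun τ => g (fun t => if t ≤ i then s else τ t)) := by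
  unfold Ex
  rw [← Equiv.sum_comp (consSplit (j - (i+1)) (j - i) (by omega))
    (fun σ => (∏ t ∈ Finset.Ico i j, p t (pathFn s i σ t) (pathFn s i σ (t + 1))) * g (pathFn s i σ)),
    Fintype.sum_prod_type]
  refine Finset.sum_congr rfl fun s' _ => ?_
  rw [Finset.mul_sum]
  refine Finset.sum_congr rfl fun σ' _ => ?_
  have hpath : ∀ t, t ≤ j → pathFn s i ((consSplit (j - (i + 1)) (j - i) (by omega)) (s', σ')) t =
      if t ≤ i then s else pathFn s' (i + 1) σ' t := fun t ht => pathFn_split s s' i j hij σ' t ht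
  rw [Finset.prod_eq_prod_Ico_succ_bot hij]
  have h1 : pathFn s i ((consSplit (j - (i + 1)) (j - i) (by omega)) (s', σ')) i = s := by
    rw [hpath i (le_of_lt hij)]; simp
  have h2 : pathFn s i ((consSplit (j - (i + 1)) (j - i) (by omega)) (s', σ')) (i+1) = s' := by
    rw [hpath (i+1) hij]
    simp only [pathFn]
    rw [if_neg (by omega), dif_neg (by omega)]
  rw [h1, h2]
  have hprod : ∏ t ∈ Finset.Ico (i+1) j,
      p t (pathFn s i ((consSplit (j - (i + 1)) (j - i) (by omega)) (s', σ')) t)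
        (pathFn s i ((consSplit (j - (i + 1)) (j - i) (by omega)) (s', σ')) (t + 1)) =
      ∏ t ∈ Finset.Ico (i+1) j, p t (pathFn s' (i+1) σ' t) (pathFn s' (i+1) σ' (t+1)) := by
    refine Finset.prod_congr rfl fun t ht => ?_
    rw [Finset.mem_Ico] at ht
    rw [hpath t (by omega), hpath (t+1) (by omega), if_neg (by omega), if_neg (by omega)]
  have hgeq : g (pathFn s i ((consSplit (j - (i + 1)) (j - i) (by omega)) (s', σ'))) =
      g (fun t => if t ≤ i then s else pathFn s' (i+1) σ' t) := by
    exact hg _ _ fun t h1 h2 => hpath t h2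
  rw [hprod, hgeq]
  ring

lemma Ex_one {S : Type*} [Fintype S] (p : ℕ → S → S → ℝ) (j : ℕ) :
    ∀ n i, i ≤ j → j - i = n →
    (∀ t, i ≤ t → t < j → ∀ s, ∑ s', p t s s' = 1) →
    ∀ s : S, Ex p i j s (fun _ => (1 : ℝ)) = 1 := by
  intro n
  induction n with
  | zero =>
    intro i hij hn hp s
    have : i = j := by omega
    subst this
    rw [Ex_self]
  | succ n ih =>
    intro i hij hn hp s
    have hij' : i < j := by omega
    rw [Ex_step p i j hij' s (fun _ => (1:ℝ)) (fun _ _ _ => rfl)]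
    have hin : ∀ s' : S, Ex p (i+1) j s' (fun _ => (1:ℝ)) = 1 :=
      fun s' => ih (i+1) (by omega) (by omega) (fun t h1 h2 => hp t (by omega) h2) s'
    simp only [hin, mul_one]
    exact hp i le_rfl hij' s

lemma Ex_const {S : Type*} [Fintype S] (p : ℕ → S → S → ℝ) (i j : ℕ) (hij : i ≤ j)
    (hp : ∀ t, i ≤ t → t < j → ∀ s, ∑ s', p t s s' = 1) (s : S) (c : ℝ) :
    Ex p i j s (fun _ => c) = c := by
  have h1 : (fun _ : ℕ → S => c) = (fun τ : ℕ → S => c * (fun _ : ℕ → S => (1:ℝ)) τ) := by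
    funext τ; ring
  rw [h1, Ex_const_mul, Ex_one p j (j - i) i hij rfl hp s, mul_one]

lemma Icc_sum_split {S : Type*} (i j : ℕ) (hij : i ≤ j) (f : ℕ → S → ℝ) (s : S) (τ : ℕ → S) :
    ∑ t ∈ Finset.Icc i j, f t (if t ≤ i then s else τ t) =
      f i s + ∑ t ∈ Finset.Icc (i+1) j, f t (τ t) := by
  rw [← Finset.Ico_add_one_right_eq_Icc, Finset.sum_eq_sum_Ico_succ_bot (by omega), if_pos le_rfl,
    Finset.Ico_add_one_right_eq_Icc]
  congr 1
  refine Finset.sum_congr rfl fun t ht => ?_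
  rw [Finset.mem_Icc] at ht
  rw [if_neg (by omega)]

lemma Ex_reward {S : Type*} [Fintype S] (p : ℕ → S → S → ℝ) (r : ℕ → S → ℝ) (j : ℕ) :
    ∀ n i, i ≤ j → j - i = n →
    (∀ t, i ≤ t → t < j → ∀ s, ∑ s', p t s s' = 1) →
    ∀ s : S, Ex p i j s (fun τ => ∑ t ∈ Finset.Icc i j, r t (τ t)) = Vf p r i j s := by
  intro n
  induction n with
  | zero =>
    intro i hij hn hp s
    have : i = j := by omega
    subst this
    rw [Ex_self, Vf, dif_neg (lt_irrefl i)]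
    simp
  | succ n ih =>
    intro i hij hn hp s
    have hij' : i < j := by omega
    rw [Ex_step p i j hij' s _ (fun τ τ' h => Finset.sum_congr rfl fun t ht => by
      rw [Finset.mem_Icc] at ht; rw [h t ht.1 ht.2])]
    have key : ∀ s' : S,
        Ex p (i+1) j s' (fun τ => ∑ t ∈ Finset.Icc i j, r t (if t ≤ i then s else τ t)) =
        r i s + Vf p r (i+1) j s' := by
      intro s'
      have h1 : (fun τ : ℕ → S => ∑ t ∈ Finset.Icc i j, r t (if t ≤ i then s else τ t)) =
          (fun τ : ℕ → S => (fun _ : ℕ → S => r i s) τ +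
            (fun τ : ℕ → S => ∑ t ∈ Finset.Icc (i+1) j, r t (τ t)) τ) := by
        funext τ
        exact Icc_sum_split i j (le_of_lt hij') r s τ
      rw [h1, Ex_add,
        Ex_const p (i+1) j hij' (fun t h1 h2 => hp t (by omega) h2) s' (r i s),
        ih (i+1) hij' (by omega) (fun t h1 h2 => hp t (by omega) h2) s']
    simp only [key]
    conv_rhs => rw [Vf, dif_pos hij']
    have hsum : ∑ s', p i s s' * (r i s + Vf p r (i+1) j s') =
        (∑ s', p i s s') * r i s + ∑ s', p i s s' * Vf p r (i+1) j s' := by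
      rw [Finset.sum_mul, ← Finset.sum_add_distrib]
      exact Finset.sum_congr rfl fun s' _ => by ring
    rw [hsum, hp i le_rfl hij' s, one_mul]
    rfl

/-- The variance of the value function satisfies a Bellman equation. -/
theorem variance_bellman_equation
    {S : Type*} [Fintype S] [Nonempty S] (H : ℕ) (hH : 1 ≤ H)
    (r : ℕ → S → ℝ) (p : ℕ → S → S → ℝ)
    (hp_nonneg : ∀ t, 1 ≤ t → t ≤ H → ∀ s s', 0 ≤ p t s s')
    (hp_sum : ∀ t, 1 ≤ t → t ≤ H → ∀ s, ∑ s', p t s s' = 1) :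
    (∀ j, 1 ≤ j → j ≤ H → ∀ s : S, VarV p r j j s = 0) ∧
    (∀ i j, 1 ≤ i → i < j → j ≤ H → ∀ s : S,
      VarV p r i j s = Pop p i (VarV p r (i + 1) j) s + sigmaSq p r i j s) := by
  constructor
  · intro j h1 h2 s
    unfold VarV
    rw [Ex_self]
    rw [Vf, dif_neg (lt_irrefl j)]
    simp
  · intro i j h1 hij h2 s
    have hpr : ∀ t, i + 1 ≤ t → t < j → ∀ s, ∑ s', p t s s' = 1 :=
      fun t ht1 ht2 => hp_sum t (by omega) (by omega)
    set V' : S → ℝ := Vf p r (i+1) j with hV'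
    set m : ℝ := Pop p i V' s with hm
    have hVf : Vf p r i j s = r i s + m := by rw [Vf, dif_pos hij]
    unfold VarV
    rw [Ex_step p i j hij s _ (fun τ τ' h => by
      have : ∑ t ∈ Finset.Icc i j, r t (τ t) = ∑ t ∈ Finset.Icc i j, r t (τ' t) :=
        Finset.sum_congr rfl fun t ht => by
          rw [Finset.mem_Icc] at ht; rw [h t ht.1 ht.2]
      rw [this])]
    have key : ∀ s' : S,
        Ex p (i+1) j s' (fun τ =>
          ((∑ t ∈ Finset.Icc i j, r t (if t ≤ i then s else τ t)) - Vf p r i j s) ^ 2) =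
        VarV p r (i+1) j s' + (V' s' - m) ^ 2 := by
      intro s'
      set c : ℝ := V' s' - m with hc
      have h1' : (fun τ : ℕ → S =>
          ((∑ t ∈ Finset.Icc i j, r t (if t ≤ i then s else τ t)) - Vf p r i j s) ^ 2) =
          (fun τ : ℕ → S =>
            (fun τ : ℕ → S => ((∑ t ∈ Finset.Icc (i+1) j, r t (τ t)) - V' s') ^ 2) τ +
            (fun τ : ℕ → S =>
              (2 * c) * (fun τ : ℕ → S => ∑ t ∈ Finset.Icc (i+1) j, r t (τ t)) τ +
              (fun _ : ℕ → S => c ^ 2 - 2 * c * V' s') τ) τ) := by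
        funext τ
        rw [Icc_sum_split i j (le_of_lt hij) r s τ, hVf]
        have hmc : m = V' s' - c := by rw [hc]; ring
        rw [hmc]
        ring
      rw [h1', Ex_add, Ex_add, Ex_const_mul,
        Ex_reward p r j (j - (i+1)) (i+1) hij rfl hpr s',
        Ex_const p (i+1) j hij hpr s' (c ^ 2 - 2 * c * V' s')]
      have : VarV p r (i+1) j s' =
          Ex p (i+1) j s' (fun τ => ((∑ t ∈ Finset.Icc (i+1) j, r t (τ t)) - V' s') ^ 2) := rfl
      rw [← this]
      ring
    simp only [key]
    have hfinal : ∑ s', p i s s' * (VarV p r (i+1) j s' + (V' s' - m) ^ 2) =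
        (∑ s', p i s s' * VarV p r (i+1) j s') + ∑ s', p i s s' * (V' s' - m) ^ 2 := by
      rw [← Finset.sum_add_distrib]
      exact Finset.sum_congr rfl fun s' _ => by ring
    rw [hfinal]
    unfold sigmaSq
    rw [if_pos hij]
    rfl
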